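/- Let T = Trian(A, M, B) be a triangular algebra over R such that A and B have only trivial idempotents. If σ is an algebra automorphism of T which is centralizing, i.e. σ(x)x − xσ(x) ∈ Z(T) for all x ∈ T, then σ is the identity map on T. -/

import Mathlib

/-!
Triangular algebras `Trian(A, M, B)` realized on the type `A × M × B`, where `A`, `B` are
unital associative `R`-algebras and `M` is an `(A, B)`-bimodule (a left `A`-module and a
right `B`-module, the right action being encoded as a left `Bᵐᵒᵖ`-action, written
`op b • m`, with the two actions commuting), compatible with the `R`-module structure.
-/

set_option linter.unusedSectionVars false

open MulOpposite

variable {R A B M : Type*} [CommRing R] [Ring A] [Ring B]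
  [Algebra R A] [Algebra R B]
  [AddCommGroup M] [Module R M]
  [Module A M] [Module Bᵐᵒᵖ M]
  [SMulCommClass A Bᵐᵒᵖ M]
  [IsScalarTower R A M] [SMulCommClass R A M]
  [IsScalarTower R Bᵐᵒᵖ M] [SMulCommClass R Bᵐᵒᵖ M]

/-- Multiplication of the triangular algebra `Trian(A, M, B)`:
`(a, m, b) * (a', m', b') = (a * a', a • m' + m • b', b * b')`, where the right action of
`B` on `M` is written `op b • m`. -/
instance triMul : Mul (A × M × B) :=
  ⟨fun x y => (x.1 * y.1, x.1 • y.2.1 + op y.2.2 • x.2.1, x.2.2 * y.2.2)⟩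

theorem tri_mul_def (x y : A × M × B) :
    x * y = (x.1 * y.1, x.1 • y.2.1 + op y.2.2 • x.2.1, x.2.2 * y.2.2) := rfl

instance triOne : One (A × M × B) := ⟨(1, 0, 1)⟩

theorem tri_one_def : (1 : A × M × B) = (1, 0, 1) := rfl

/-- The triangular algebra `Trian(A, M, B)` as a ring structure on `A × M × B`. -/
instance triRing : Ring (A × M × B) where
  __ := (inferInstance : AddCommGroup (A × M × B))
  __ := triMul
  __ := triOne
  left_distrib x y z := by
    refine Prod.ext ?_ (Prod.ext ?_ ?_) <;>
      simp [tri_mul_def, mul_add, smul_add, add_smul, Prod.fst_add, Prod.snd_add] <;> abel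
  right_distrib x y z := by
    refine Prod.ext ?_ (Prod.ext ?_ ?_) <;>
      simp [tri_mul_def, add_mul, smul_add, add_smul, Prod.fst_add, Prod.snd_add] <;> abel
  zero_mul x := by
    refine Prod.ext ?_ (Prod.ext ?_ ?_) <;> simp [tri_mul_def]
  mul_zero x := by
    refine Prod.ext ?_ (Prod.ext ?_ ?_) <;> simp [tri_mul_def]
  mul_assoc x y z := by
    refine Prod.ext (mul_assoc _ _ _) (Prod.ext ?_ (mul_assoc _ _ _))
    show (x.1 * y.1) • z.2.1 + op z.2.2 • (x.1 • y.2.1 + op y.2.2 • x.2.1)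
        = x.1 • (y.1 • z.2.1 + op z.2.2 • y.2.1) + op (y.2.2 * z.2.2) • x.2.1
    rw [mul_smul, smul_add, smul_add, op_mul, mul_smul, smul_comm x.1 (op z.2.2)]
    abel
  one_mul x := by
    refine Prod.ext (one_mul _) (Prod.ext ?_ (one_mul _))
    show (1 : A) • x.2.1 + op x.2.2 • (0 : M) = x.2.1
    simp
  mul_one x := by
    refine Prod.ext (mul_one _) (Prod.ext ?_ (mul_one _))
    show x.1 • (0 : M) + op (1 : B) • x.2.1 = x.2.1
    simp

/-- The triangular algebra `Trian(A, M, B)` as an `R`-algebra. -/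
instance triAlgebra : Algebra R (A × M × B) :=
  Algebra.ofModule
    (fun r x y => by
      refine Prod.ext ?_ (Prod.ext ?_ ?_)
      · exact smul_mul_assoc r x.1 y.1
      · show (r • x.1) • y.2.1 + op y.2.2 • (r • x.2.1) = r • (x.1 • y.2.1 + op y.2.2 • x.2.1)
        rw [smul_assoc, smul_add, smul_comm (op y.2.2) r]
      · exact smul_mul_assoc r x.2.2 y.2.2)
    (fun r x y => by
      refine Prod.ext ?_ (Prod.ext ?_ ?_)
      · exact mul_smul_comm r x.1 y.1
      · show x.1 • (r • y.2.1) + op (r • y.2.2) • x.2.1 = r • (x.1 • y.2.1 + op y.2.2 • x.2.1)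
        rw [op_smul, smul_assoc, smul_add, smul_comm x.1 r]
      · exact mul_smul_comm r x.2.2 y.2.2)

/-- Mayne's theorem for triangular algebras: a centralizing algebra
automorphism of a triangular algebra whose corner algebras have only trivial idempotents
is the identity. -/
theorem centralizing_automorphism_eq_id
    [Nontrivial M] [FaithfulSMul A M] [FaithfulSMul Bᵐᵒᵖ M]
    (hA : ∀ e : A, e * e = e → e = 0 ∨ e = 1)
    (hB : ∀ e : B, e * e = e → e = 0 ∨ e = 1)
    (σ : (A × M × B) ≃ₐ[R] (A × M × B))
    (hc : ∀ x y : A × M × B, (σ x * x - x * σ x) * y = y * (σ x * x - x * σ x)) :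
    ∀ x : A × M × B, σ x = x := by
  obtain ⟨m₀, hm₀⟩ := exists_ne (0 : M)
  -- σ (1,0,0) analysis
  obtain ⟨a, m, b, hσp⟩ : ∃ a m b, σ ((1 : A), (0 : M), (0 : B)) = (a, m, b) := ⟨_, _, _, rfl⟩
  have hm : m = 0 := by
    have h := hc ((1 : A), (0 : M), (0 : B)) ((1 : A), (0 : M), (0 : B))
    rw [hσp] at h
    have h2 := congrArg (fun x : A × M × B => x.2.1) h
    simpa [tri_mul_def, Prod.mk_sub_mk, neg_eq_zero, eq_comm] using h2
  subst hm
  have hpp : ((1 : A), (0 : M), (0 : B)) * ((1 : A), (0 : M), (0 : B))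
      = ((1 : A), (0 : M), (0 : B)) := by
    simp [tri_mul_def]
  have hidem : (a, (0 : M), b) * (a, (0 : M), b) = (a, (0 : M), b) := by
    rw [← hσp, ← map_mul, hpp, hσp]
  have haa : a * a = a := (Prod.mk.injEq _ _ _ _ ▸ hidem).1
  have hbb : b * b = b := by
    have := congrArg (fun x : A × M × B => x.2.2) hidem
    simpa [tri_mul_def] using this
  -- figure out σ p = p
  have hσp' : σ ((1 : A), (0 : M), (0 : B)) = ((1 : A), (0 : M), (0 : B)) := by
    rcases hA a haa with ha0 | ha1
    · rcases hB b hbb with hb0 | hb1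
      · -- σ p = 0 : impossible
        exfalso
        rw [ha0, hb0] at hσp
        have h0 : σ ((1 : A), (0 : M), (0 : B)) = σ 0 := by
          rw [hσp, map_zero]; exact Prod.ext rfl (Prod.ext rfl rfl)
        have h1 : ((1 : A), (0 : M), (0 : B)) = (0 : A × M × B) := σ.injective h0
        have hA1 : (1 : A) = 0 := (Prod.mk.injEq _ _ _ _ ▸ h1).1
        apply hm₀
        calc m₀ = (1 : A) • m₀ := (one_smul _ _).symm
          _ = (0 : A) • m₀ := by rw [hA1]
          _ = 0 := zero_smul _ _
      · -- σ p = q : impossible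
        exfalso
        rw [ha0, hb1] at hσp
        have hσq : σ ((0 : A), (0 : M), (1 : B)) = ((1 : A), (0 : M), (0 : B)) := by
          have h1 : ((0 : A), (0 : M), (1 : B))
              = (1 : A × M × B) - ((1 : A), (0 : M), (0 : B)) := by
            simp [tri_one_def, Prod.mk_sub_mk]
          rw [h1, map_sub, map_one, hσp]
          simp [tri_one_def, Prod.mk_sub_mk]
          rfl
        have hu : ((0 : A), m₀, (0 : B))
            = ((1 : A), (0 : M), (0 : B)) * ((0 : A), m₀, (0 : B))
              * ((0 : A), (0 : M), (1 : B)) := by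
          simp [tri_mul_def]
        have h2 : σ ((0 : A), m₀, (0 : B)) = 0 := by
          rw [hu, map_mul, map_mul, hσp, hσq]
          obtain ⟨c, n, d, hy⟩ : ∃ c n d, σ ((0 : A), m₀, (0 : B)) = (c, n, d) :=
            ⟨_, _, _, rfl⟩
          rw [hy]
          simp [tri_mul_def, Prod.ext_iff]
        have h3 : ((0 : A), m₀, (0 : B)) = (0 : A × M × B) := by
          apply σ.injective; rw [h2, map_zero]
        exact hm₀ (congrArg (fun x : A × M × B => x.2.1) h3)
    · rcases hB b hbb with hb0 | hb1
      · rw [ha1, hb0] at hσp; exact hσp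
      · -- σ p = 1 : impossible
        exfalso
        rw [ha1, hb1] at hσp
        have h0 : σ ((1 : A), (0 : M), (0 : B)) = σ 1 := by rw [hσp, map_one]; rfl
        have h1 : ((1 : A), (0 : M), (0 : B)) = (1 : A × M × B) := σ.injective h0
        have hB1 : (0 : B) = 1 := by
          have := congrArg (fun x : A × M × B => x.2.2) h1
          simpa [tri_one_def] using this
        apply hm₀
        calc m₀ = op (1 : B) • m₀ := by rw [op_one, one_smul]
          _ = op (0 : B) • m₀ := by rw [← hB1]
          _ = 0 := by rw [op_zero, zero_smul]
  clear hσp haa hbb hidem a b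
  -- σ q = q
  have hσq : σ ((0 : A), (0 : M), (1 : B)) = ((0 : A), (0 : M), (1 : B)) := by
    have h1 : ((0 : A), (0 : M), (1 : B))
        = (1 : A × M × B) - ((1 : A), (0 : M), (0 : B)) := by
      simp [tri_one_def, Prod.mk_sub_mk]
    rw [h1, map_sub, map_one, hσp']
  -- corner structure lemmas
  have L2 : ∀ n : M, ∃ n' : M, σ ((0 : A), n, (0 : B)) = (0, n', 0) := by
    intro n
    obtain ⟨c, n', d, hy⟩ : ∃ c n' d, σ ((0 : A), n, (0 : B)) = (c, n', d) := ⟨_, _, _, rfl⟩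
    refine ⟨n', ?_⟩
    have hu : ((0 : A), n, (0 : B))
        = ((1 : A), (0 : M), (0 : B)) * ((0 : A), n, (0 : B))
          * ((0 : A), (0 : M), (1 : B)) := by
      simp [tri_mul_def]
    have := congrArg σ hu
    rw [map_mul, map_mul, hσp', hσq, hy] at this
    rw [hy, this]
    simp [tri_mul_def]
  -- σ fixes (0, n, 0)
  have C1 : ∀ n : M, σ ((0 : A), n, (0 : B)) = ((0 : A), n, (0 : B)) := by
    intro n
    obtain ⟨n', hn'⟩ := L2 n
    have hx : σ ((1 : A), n, (0 : B)) = ((1 : A), n', (0 : B)) := by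
      have hsum : ((1 : A), n, (0 : B))
          = ((1 : A), (0 : M), (0 : B)) + ((0 : A), n, (0 : B)) := by
        simp [Prod.mk_add_mk]
      rw [hsum, map_add, hσp', hn']
      simp [Prod.mk_add_mk]
    have h := hc ((1 : A), n, (0 : B)) ((1 : A), (0 : M), (0 : B))
    rw [hx] at h
    have h2 := congrArg (fun x : A × M × B => x.2.1) h
    simp only [tri_mul_def, Prod.fst_sub, Prod.snd_sub] at h2
    simp only [one_smul, zero_smul, smul_zero, op_zero, add_zero, zero_add, sub_zero] at h2
    have h3 : n' = n := by
      have := h2.symm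
      rw [sub_eq_zero] at this
      first
      | exact this
      | exact this.symm
      | (rw [← sub_eq_zero] at this ⊢; simpa using this)
    rw [hn', h3]
  -- σ fixes (a, 0, 0)
  have C2 : ∀ a : A, σ ((a : A), (0 : M), (0 : B)) = (a, 0, 0) := by
    intro a
    obtain ⟨a', z, w, hy⟩ : ∃ a' z w, σ ((a : A), (0 : M), (0 : B)) = (a', z, w) :=
      ⟨_, _, _, rfl⟩
    have hL1 : z = 0 ∧ w = 0 := by
      have hu : ((a : A), (0 : M), (0 : B))
          = ((1 : A), (0 : M), (0 : B)) * ((a : A), (0 : M), (0 : B))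
            * ((1 : A), (0 : M), (0 : B)) := by
        simp [tri_mul_def]
      have h := congrArg σ hu
      rw [map_mul, map_mul, hσp', hy] at h
      constructor
      · have := congrArg (fun x : A × M × B => x.2.1) h
        simpa [tri_mul_def] using this
      · have := congrArg (fun x : A × M × B => x.2.2) h
        simpa [tri_mul_def] using this
    obtain ⟨hz, hw⟩ := hL1
    subst hz hw
    have key : ∀ n : M, a' • n = a • n := by
      intro n
      have hx : σ ((a : A), n, (0 : B)) = (a', n, (0 : B)) := by
        have hsum : ((a : A), n, (0 : B))
            = ((a : A), (0 : M), (0 : B)) + ((0 : A), n, (0 : B)) := by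
          simp [Prod.mk_add_mk]
        rw [hsum, map_add, hy, C1 n]
        simp [Prod.mk_add_mk]
      have h := hc ((a : A), n, (0 : B)) ((1 : A), (0 : M), (0 : B))
      rw [hx] at h
      have := congrArg (fun x : A × M × B => x.2.1) h
      simp only [tri_mul_def, Prod.fst_sub, Prod.snd_sub] at this
      simp only [one_smul, zero_smul, smul_zero, op_zero, add_zero, zero_add, sub_zero,
        mul_zero, zero_mul, mul_one, one_mul] at this
      have h4 := this.symm
      rw [sub_eq_zero] at h4
      first | exact h4 | exact h4.symm
    have : a' = a := eq_of_smul_eq_smul key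
    rw [hy, this]
  -- σ fixes (0, 0, b)
  have C3 : ∀ b : B, σ ((0 : A), (0 : M), b) = (0, 0, b) := by
    intro b
    obtain ⟨c, z, b', hy⟩ : ∃ c z b', σ ((0 : A), (0 : M), b) = (c, z, b') :=
      ⟨_, _, _, rfl⟩
    have hL3 : c = 0 ∧ z = 0 := by
      have hu : ((0 : A), (0 : M), b)
          = ((0 : A), (0 : M), (1 : B)) * ((0 : A), (0 : M), b)
            * ((0 : A), (0 : M), (1 : B)) := by
        simp [tri_mul_def]
      have h := congrArg σ hu
      rw [map_mul, map_mul, hσq, hy] at h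
      constructor
      · have := congrArg (fun x : A × M × B => x.1) h
        simpa [tri_mul_def] using this
      · have := congrArg (fun x : A × M × B => x.2.1) h
        simpa [tri_mul_def] using this
    obtain ⟨hcz, hz⟩ := hL3
    subst hcz hz
    have key : ∀ n : M, op b' • n = op b • n := by
      intro n
      have hx : σ ((0 : A), n, b) = ((0 : A), n, b') := by
        have hsum : ((0 : A), n, b)
            = ((0 : A), (0 : M), b) + ((0 : A), n, (0 : B)) := by
          simp [Prod.mk_add_mk]
        rw [hsum, map_add, hy, C1 n]
        simp [Prod.mk_add_mk]
      have h := hc ((0 : A), n, b) ((1 : A), (0 : M), (0 : B))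
      rw [hx] at h
      have := congrArg (fun x : A × M × B => x.2.1) h
      simp only [tri_mul_def, Prod.fst_sub, Prod.snd_sub] at this
      simp only [one_smul, zero_smul, smul_zero, op_zero, add_zero, zero_add, sub_zero,
        mul_zero, zero_mul, mul_one, one_mul] at this
      have h4 := this.symm
      rw [sub_eq_zero] at h4
      first | exact h4 | exact h4.symm
    have : op b' = op b := eq_of_smul_eq_smul key
    rw [hy, op_injective this]
  -- conclude
  intro x
  obtain ⟨a, n, b⟩ := x
  have hsum : ((a : A), n, b)
      = ((a : A), (0 : M), (0 : B)) + ((0 : A), n, (0 : B)) + ((0 : A), (0 : M), b) := by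
    simp [Prod.mk_add_mk]
  rw [hsum, map_add, map_add, C2 a, C1 n, C3 b]
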